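/- Let R be an elementary divisor ring. Then for each integer n ≥ 3, the matrix ring M_n(R) of n × n matrices over R is twin-good. -/

import Mathlib

open Matrix

namespace TwinGoodAux

variable {R : Type*} [Ring R] {n : ℕ}

/-- the cyclic rotation `i ↦ i - 1 (mod n)` on `Fin n` -/
def rot (hn : 0 < n) : Equiv.Perm (Fin n) where
  toFun i := ⟨if (i : ℕ) = 0 then n - 1 else (i : ℕ) - 1, by split <;> omega⟩
  invFun j := ⟨if (j : ℕ) = n - 1 then 0 else (j : ℕ) + 1, by have := j.isLt; split <;> omega⟩
  left_inv i := by
    have h := i.isLt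
    apply Fin.ext
    simp only [Fin.val_mk]
    by_cases h0 : (i : ℕ) = 0
    · rw [if_pos h0, if_pos rfl]; omega
    · rw [if_neg h0]
      by_cases h1 : (i : ℕ) - 1 = n - 1
      · rw [if_pos h1]; omega
      · rw [if_neg h1]; omega
  right_inv j := by
    have h := j.isLt
    apply Fin.ext
    simp only [Fin.val_mk]
    by_cases h0 : (j : ℕ) = n - 1
    · rw [if_pos h0, if_pos rfl]; omega
    · rw [if_neg h0]
      by_cases h1 : (j : ℕ) + 1 = 0
      · omega
      · rw [if_neg h1]; omega

lemma rot_apply (hn : 0 < n) (i : Fin n) :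
    ((rot hn i : Fin n) : ℕ) = if (i : ℕ) = 0 then n - 1 else (i : ℕ) - 1 := by
  simp [rot]

lemma rot_symm_apply (hn : 0 < n) (j : Fin n) :
    (((rot hn).symm j : Fin n) : ℕ) = if (j : ℕ) = n - 1 then 0 else (j : ℕ) + 1 := by
  simp [rot, Equiv.coe_fn_symm_mk]

/-- permutation matrix of `σ` -/
def pmat (σ : Equiv.Perm (Fin n)) : Matrix (Fin n) (Fin n) R :=
  Matrix.of fun i j => if σ i = j then 1 else 0

lemma mul_pmat (σ : Equiv.Perm (Fin n)) (M : Matrix (Fin n) (Fin n) R) :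
    M * pmat σ = Matrix.of fun i j => M i (σ.symm j) := by
  ext i j
  rw [mul_apply]
  simp only [pmat, of_apply, mul_ite, mul_one, mul_zero]
  rw [Finset.sum_eq_single (σ.symm j)]
  · simp
  · intro b _ hb
    rw [if_neg]
    intro h
    exact hb (by rw [← h]; simp)
  · simp

lemma pmat_mul_pmat_symm (σ : Equiv.Perm (Fin n)) :
    (pmat σ : Matrix (Fin n) (Fin n) R) * pmat σ.symm = 1 := by
  rw [mul_pmat]
  ext i j
  simp [pmat, one_apply, Equiv.eq_symm_apply]

lemma isUnit_pmat (σ : Equiv.Perm (Fin n)) : IsUnit (pmat σ : Matrix (Fin n) (Fin n) R) := by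
  refine ⟨⟨pmat σ, pmat σ.symm, pmat_mul_pmat_symm σ, ?_⟩, rfl⟩
  simpa using pmat_mul_pmat_symm σ.symm

lemma isUnit_one_add_sb (i j : Fin n) (h : j ≠ i) (c : R) :
    IsUnit ((1 : Matrix (Fin n) (Fin n) R) + Matrix.single i j c) := by
  refine IsNilpotent.isUnit_one_add ⟨2, ?_⟩
  rw [sq]
  exact Matrix.single_mul_single_of_ne (c := c) i j i h c

lemma isUnit_one_sub_sb (i j : Fin n) (h : j ≠ i) (c : R) :
    IsUnit ((1 : Matrix (Fin n) (Fin n) R) - Matrix.single i j c) := by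
  refine IsNilpotent.isUnit_one_sub ⟨2, ?_⟩
  rw [sq]
  exact Matrix.single_mul_single_of_ne (c := c) i j i h c

lemma sb_mul (i j : Fin n) (c : R) (M : Matrix (Fin n) (Fin n) R) :
    Matrix.single i j c * M = Matrix.of fun a b => if i = a then c * M j b else 0 := by
  ext a b
  rw [of_apply]
  by_cases h : a = i
  · subst h
    rw [if_pos rfl]
    simp
  · rw [if_neg (fun hc => h hc.symm)]
    exact Matrix.single_mul_apply_of_ne (c := c) i j a b h M

lemma sb_mul_pmat (i j : Fin n) (c : R) (σ : Equiv.Perm (Fin n)) :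
    Matrix.single i j c * (pmat σ : Matrix (Fin n) (Fin n) R) = Matrix.single i (σ j) c := by
  rw [sb_mul]
  ext a b
  show (if i = a then c * (if σ j = b then (1:R) else 0) else 0)
      = Matrix.single i (σ j) c a b
  unfold Matrix.single
  by_cases h1 : i = a
  · rw [if_pos h1]
    by_cases h2 : σ j = b
    · rw [if_pos h2, of_apply, if_pos ⟨h1, h2⟩, mul_one]
    · rw [if_neg h2, of_apply, if_neg (fun hc => h2 hc.2), mul_zero]
  · rw [if_neg h1, of_apply, if_neg (fun hc => h1 hc.1)]

/-- strictly upper shift matrix with entries d -/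
def ushift (d : Fin n → R) : Matrix (Fin n) (Fin n) R :=
  Matrix.of fun i j => if (i : ℕ) + 1 = (j : ℕ) then d i else 0

lemma ushift_pow_eq_zero (d : Fin n → R) (k : ℕ) :
    ∀ i j : Fin n, (j : ℕ) < (i : ℕ) + k → (ushift d ^ k) i j = 0 := by
  induction k with
  | zero =>
    intro i j h
    rw [pow_zero]
    exact one_apply_ne (fun hij => by subst hij; omega)
  | succ k ih =>
    intro i j h
    rw [pow_succ', mul_apply]
    refine Finset.sum_eq_zero fun m _ => ?_
    by_cases hm : (i : ℕ) + 1 = (m : ℕ)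
    · rw [show ushift d i m = d i from if_pos hm, ih m j (by omega), mul_zero]
    · rw [show ushift d i m = 0 from if_neg hm, zero_mul]

lemma isNilpotent_ushift (d : Fin n → R) : IsNilpotent (ushift d) := by
  refine ⟨n, ?_⟩
  ext i j
  rw [ushift_pow_eq_zero d n i j (by have := j.isLt; omega)]
  simp

/-- the truncated diagonal -/
def dtrunc (d : Fin n → R) : Matrix (Fin n) (Fin n) R :=
  Matrix.of fun i j => if (i : ℕ) = (j : ℕ) ∧ (i : ℕ) < n - 1 then d i else 0

lemma ushift_mul_pmat (h0 : 0 < n) (d : Fin n → R) :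
    ushift d * (pmat (rot h0) : Matrix (Fin n) (Fin n) R) = dtrunc d := by
  rw [mul_pmat]
  ext i j
  have hi := i.isLt
  have hj := j.isLt
  simp only [of_apply, ushift, dtrunc, rot_symm_apply h0]
  split_ifs <;> first | rfl | (exfalso; omega) | exact False.elim ‹False›

lemma dtrunc_row_zero (h2 : 2 ≤ n) (d : Fin n → R) (z : Fin n) (hz : (z : ℕ) = 0) (b : Fin n) :
    dtrunc d z b = if z = b then d z else 0 := by
  show (if (z : ℕ) = (b : ℕ) ∧ (z : ℕ) < n - 1 then d z else 0) = _
  by_cases hb : z = b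
  · rw [if_pos ⟨congrArg Fin.val hb, by omega⟩, if_pos hb]
  · rw [if_neg (fun hc => hb (Fin.ext hc.1)), if_neg hb]

lemma dtrunc_add_corner (d : Fin n → R) (l : Fin n) (hl : (l : ℕ) = n - 1) :
    dtrunc d + Matrix.single l l (d l) = diagonal d := by
  ext a b
  have ha := a.isLt
  show (if (a : ℕ) = (b : ℕ) ∧ (a : ℕ) < n - 1 then d a else 0)
      + (if l = a ∧ l = b then d l else 0) = diagonal d a b
  by_cases hab : a = b
  · subst hab
    rw [diagonal_apply_eq]
    by_cases hla : (a : ℕ) < n - 1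
    · rw [if_pos ⟨rfl, hla⟩, if_neg (fun hc => by
        have := congrArg Fin.val hc.1
        omega), add_zero]
    · have hal : l = a := Fin.ext (by omega)
      rw [if_neg (fun hc => hla hc.2), if_pos ⟨hal, hal⟩, zero_add, hal]
  · rw [diagonal_apply_ne _ hab,
      if_neg (fun hc => hab (Fin.ext hc.1)),
      if_neg (fun hc => hab ((hc.1.symm).trans hc.2)), add_zero]

lemma key (hn : 3 ≤ n) (d : Fin n → R) :
    ∃ U : Matrix (Fin n) (Fin n) R,
      IsUnit U ∧ IsUnit (diagonal d + U) ∧ IsUnit (diagonal d - U) := by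
  have h0 : 0 < n := by omega
  obtain ⟨z, hz⟩ : ∃ z : Fin n, (z : ℕ) = 0 := ⟨⟨0, by omega⟩, rfl⟩
  obtain ⟨o, ho⟩ : ∃ o : Fin n, (o : ℕ) = 1 := ⟨⟨1, by omega⟩, rfl⟩
  obtain ⟨l, hl⟩ : ∃ l : Fin n, (l : ℕ) = n - 1 := ⟨⟨n - 1, by omega⟩, rfl⟩
  have hzl : z ≠ l := fun h => by rw [h] at hz; omega
  have hol : o ≠ l := fun h => by rw [h] at ho; omega
  have hσz : rot h0 z = l := by
    apply Fin.ext
    rw [rot_apply, if_pos hz, hl]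
  have hσo : rot h0 o = z := by
    apply Fin.ext
    rw [rot_apply, if_neg (by omega), ho, hz]
  have hNP : ushift d * (pmat (rot h0) : Matrix (Fin n) (Fin n) R) = dtrunc d :=
    ushift_mul_pmat h0 d
  have hEP : Matrix.single l z (d l) * (pmat (rot h0) : Matrix (Fin n) (Fin n) R)
      = Matrix.single l l (d l) := by
    rw [sb_mul_pmat, hσz]
  have hED : Matrix.single l z (d l) * dtrunc d = Matrix.single l z (d l * d z) := by
    rw [sb_mul]
    ext a b
    show (if l = a then d l * dtrunc d z b else 0) = Matrix.single l z (d l * d z) a b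
    rw [dtrunc_row_zero (by omega) d z hz b]
    unfold Matrix.single
    by_cases h1 : l = a
    · rw [if_pos h1]
      by_cases h2 : z = b
      · rw [if_pos h2, of_apply, if_pos ⟨h1, h2⟩]
      · rw [if_neg h2, of_apply, if_neg (fun hc => h2 hc.2), mul_zero]
    · rw [if_neg h1, of_apply, if_neg (fun hc => h1 hc.1)]
  have hDD : dtrunc d + Matrix.single l l (d l) = diagonal d :=
    dtrunc_add_corner d l hl
  refine ⟨pmat (rot h0) + Matrix.single l z (d l * d z), ?_, ?_, ?_⟩
  · have hfact : (1 + Matrix.single l o (d l * d z)) * (pmat (rot h0) : Matrix (Fin n) (Fin n) R)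
        = pmat (rot h0) + Matrix.single l z (d l * d z) := by
      rw [add_mul, one_mul, sb_mul_pmat, hσo]
    rw [← hfact]
    exact (isUnit_one_add_sb l o hol _).mul (isUnit_pmat _)
  · have hexp : (1 + Matrix.single l z (d l))
          * ((1 + ushift d) * (pmat (rot h0) : Matrix (Fin n) (Fin n) R))
        = pmat (rot h0) + ushift d * pmat (rot h0)
          + (Matrix.single l z (d l) * pmat (rot h0)
            + Matrix.single l z (d l) * (ushift d * pmat (rot h0))) := by
      noncomm_ring
    rw [hNP, hEP, hED] at hexp
    have heq : diagonal d + (pmat (rot h0) + Matrix.single l z (d l * d z))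
        = (1 + Matrix.single l z (d l))
          * ((1 + ushift d) * (pmat (rot h0) : Matrix (Fin n) (Fin n) R)) := by
      rw [hexp, ← hDD]
      abel
    rw [heq]
    exact (isUnit_one_add_sb l z hzl _).mul
      ((isNilpotent_ushift d).isUnit_one_add.mul (isUnit_pmat _))
  · have hexp : (1 - Matrix.single l z (d l))
          * ((1 - ushift d) * (-(pmat (rot h0) : Matrix (Fin n) (Fin n) R)))
        = -(pmat (rot h0)) + ushift d * pmat (rot h0)
          + (Matrix.single l z (d l) * pmat (rot h0)
            - Matrix.single l z (d l) * (ushift d * pmat (rot h0))) := by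
      noncomm_ring
    rw [hNP, hEP, hED] at hexp
    have heq : diagonal d - (pmat (rot h0) + Matrix.single l z (d l * d z))
        = (1 - Matrix.single l z (d l))
          * ((1 - ushift d) * (-(pmat (rot h0) : Matrix (Fin n) (Fin n) R))) := by
      rw [hexp, ← hDD]
      abel
    rw [heq]
    exact (isUnit_one_sub_sb l z hzl _).mul
      ((IsNilpotent.isUnit_one_sub (isNilpotent_ushift d)).mul (isUnit_pmat _).neg)

end TwinGoodAux

set_option maxHeartbeats 1000000 in
/-- If `R` is an elementary divisor ring (every square matrix over `R` admits a
diagonal reduction), then `Mₙ(R)` is twin-good for every `n ≥ 3`. -/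
theorem matrix_twinGood_of_elementaryDivisorRing (R : Type*) [Ring R]
    (hEDR : ∀ (m : ℕ) (A : Matrix (Fin m) (Fin m) R),
      ∃ P Q : Matrix (Fin m) (Fin m) R, IsUnit P ∧ IsUnit Q ∧
        ∃ d : Fin m → R, P * A * Q = Matrix.diagonal d)
    (n : ℕ) (hn : 3 ≤ n) :
    ∀ M : Matrix (Fin n) (Fin n) R, ∃ U : Matrix (Fin n) (Fin n) R,
      IsUnit U ∧ IsUnit (M + U) ∧ IsUnit (M - U) := by
  intro M
  obtain ⟨P, Q, hP, hQ, d, hPQ⟩ := hEDR n M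
  obtain ⟨p, rfl⟩ := hP
  obtain ⟨q, rfl⟩ := hQ
  obtain ⟨U₀, hU₀, hplus, hminus⟩ := TwinGoodAux.key hn d
  have hM : M = (p⁻¹).val * Matrix.diagonal d
      * (q⁻¹).val := by
    rw [← hPQ]
    calc M = ((p⁻¹).val * p.val) * M * (q.val * (q⁻¹).val) := by
            rw [Units.inv_mul, Units.mul_inv, one_mul, mul_one]
      _ = (p⁻¹).val * (p.val * M * q.val) * (q⁻¹).val := by
            simp only [mul_assoc]
  refine ⟨(p⁻¹).val * U₀ * (q⁻¹).val,
    ?_, ?_, ?_⟩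
  · exact ((p⁻¹).isUnit.mul hU₀).mul (q⁻¹).isUnit
  · rw [show M + (p⁻¹).val * U₀ * (q⁻¹).val
        = (p⁻¹).val * (Matrix.diagonal d + U₀) * (q⁻¹).val from by
      rw [mul_add, add_mul, ← hM]]
    exact ((p⁻¹).isUnit.mul hplus).mul (q⁻¹).isUnit
  · rw [show M - (p⁻¹).val * U₀ * (q⁻¹).val
        = (p⁻¹).val * (Matrix.diagonal d - U₀) * (q⁻¹).val from by
      rw [mul_sub, sub_mul, ← hM]]
    exact ((p⁻¹).isUnit.mul hminus).mul (q⁻¹).isUnit
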